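/- Let U be a nonempty closed subset of ℝᵈ and f : ℝⁿ × U → ℝⁿ a mapping satisfying: (a) f is continuous on ℝⁿ × U; (b) f(0, u) = 0 for all u ∈ U; (c) for all u ∈ U and all x ∈ ℝⁿ, the partial Fréchet differential D₁f(x, u) exists and D₁f(·, u) is continuous from ℝⁿ into L(ℝⁿ, ℝⁿ); (d) D₁f maps nonempty bounded subsets of ℝⁿ × U into bounded subsets of L(ℝⁿ, ℝⁿ); (e) lim_{x → 0} ( sup_{u ∈ B} ‖D₁f(x, u)‖ ) = 0 for every nonempty bounded subset B ⊂ U. Then the operator 𝒯(x, u) := (x_{t+1} − f(x_t, u_t))_{t∈ℕ} satisfies: (α) 𝒯 is continuous from c₀(ℕ, ℝⁿ) × ℓ∞(ℕ, U) into c₀(ℕ, ℝⁿ); (β) for every (x, u) ∈ c₀(ℕ, ℝⁿ) × ℓ∞(ℕ, U) the partial Fréchet differential D₁𝒯(x, u) exists, and for each fixed u ∈ ℓ∞(ℕ, U) the map x ↦ D₁𝒯(x, u) is continuous from c₀(ℕ, ℝⁿ) into L(c₀(ℕ, ℝⁿ), c₀(ℕ, ℝⁿ)). -/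

import Mathlib

open Filter Topology Bornology Set ZeroAtInfty
open scoped ENNReal

noncomputable section

instance : Fact ((1 : ℝ≥0∞) ≤ ⊤) := ⟨le_top⟩

namespace Stmt5Aux

variable {n d : ℕ}

def mkC0 (g : ℕ → (Fin n → ℝ)) (hg : Tendsto g atTop (𝓝 0)) : C₀(ℕ, Fin n → ℝ) :=
  ⟨⟨g, continuous_of_discreteTopology⟩, by rwa [cocompact_eq_atTop]⟩

@[simp] lemma mkC0_apply (g : ℕ → (Fin n → ℝ)) (hg) (t : ℕ) : mkC0 g hg t = g t := rfl

lemma C0_tendsto (x : C₀(ℕ, Fin n → ℝ)) : Tendsto (fun t => x t) atTop (𝓝 0) := by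
  have := x.zero_at_infty'; rwa [cocompact_eq_atTop] at this

lemma C0_norm_le (x : C₀(ℕ, Fin n → ℝ)) {C : ℝ} (hC : 0 ≤ C) (h : ∀ t, ‖x t‖ ≤ C) :
    ‖x‖ ≤ C := by
  rw [← ZeroAtInftyContinuousMap.norm_toBCF_eq_norm]
  exact (BoundedContinuousFunction.norm_le hC).2 h

lemma C0_norm_apply_le (x : C₀(ℕ, Fin n → ℝ)) (t : ℕ) : ‖x t‖ ≤ ‖x‖ := by
  rw [← ZeroAtInftyContinuousMap.norm_toBCF_eq_norm]
  exact x.toBCF.norm_coe_le_norm t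

lemma lp_norm_apply_le (u : lp (fun _ : ℕ => Fin d → ℝ) ⊤) (t : ℕ) : ‖u t‖ ≤ ‖u‖ :=
  lp.norm_apply_le_norm ENNReal.top_ne_zero u t

lemma lp_range_bounded (u : lp (fun _ : ℕ => Fin d → ℝ) ⊤) :
    IsBounded (Set.range fun t => u t) := by
  rw [isBounded_iff_forall_norm_le]
  exact ⟨‖u‖, by rintro y ⟨t, rfl⟩; exact lp_norm_apply_le u t⟩

lemma exists_pos_forall_le (T₀ : ℕ) (δf : ℕ → ℝ) (h : ∀ t < T₀, 0 < δf t) :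
    ∃ δ > 0, ∀ t < T₀, δ ≤ δf t := by
  induction T₀ with
  | zero => exact ⟨1, one_pos, by omega⟩
  | succ k ih =>
    obtain ⟨δ, hδ, hle⟩ := ih (fun t ht => h t (by omega))
    refine ⟨min δ (δf k), lt_min hδ (h k (by omega)), fun t ht => ?_⟩
    rcases Nat.lt_succ_iff_lt_or_eq.1 ht with h' | rfl
    · exact (min_le_left _ _).trans (hle t h')
    · exact min_le_right _ _

/-- the shift operator -/
def shiftL : C₀(ℕ, Fin n → ℝ) →L[ℝ] C₀(ℕ, Fin n → ℝ) :=
  LinearMap.mkContinuous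
    { toFun := fun x => mkC0 (fun t => x (t + 1))
        ((C0_tendsto x).comp (tendsto_add_atTop_nat 1))
      map_add' := fun x y => by ext t; simp
      map_smul' := fun c x => by ext t; simp }
    1 (fun x => by
      simp only [LinearMap.coe_mk, AddHom.coe_mk, one_mul]
      exact C0_norm_le _ (norm_nonneg x) (fun t => C0_norm_apply_le x (t + 1)))

@[simp] lemma shiftL_apply (x : C₀(ℕ, Fin n → ℝ)) (t : ℕ) : shiftL x t = x (t + 1) := rfl

/-- diagonal operator from a bounded family -/
def diagL (A : ℕ → ((Fin n → ℝ) →L[ℝ] (Fin n → ℝ))) {M : ℝ} (hM : 0 ≤ M)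
    (hA : ∀ t, ‖A t‖ ≤ M) : C₀(ℕ, Fin n → ℝ) →L[ℝ] C₀(ℕ, Fin n → ℝ) :=
  LinearMap.mkContinuous
    { toFun := fun h => mkC0 (fun t => A t (h t)) (by
        rw [tendsto_zero_iff_norm_tendsto_zero]
        refine squeeze_zero (g := fun t => M * ‖h t‖) (fun t => norm_nonneg _)
          (fun t => ?_) ?_
        · exact ((A t).le_opNorm (h t)).trans
            (mul_le_mul_of_nonneg_right (hA t) (norm_nonneg _))
        · have := (C0_tendsto h).norm
          simpa using this.const_mul M)
      map_add' := fun a b => by ext t; simp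
      map_smul' := fun c a => by ext t; simp }
    M (fun h => by
      simp only [LinearMap.coe_mk, AddHom.coe_mk]
      refine C0_norm_le _ (by positivity) (fun t => ?_)
      simp only [mkC0_apply]
      calc ‖A t (h t)‖ ≤ ‖A t‖ * ‖h t‖ := (A t).le_opNorm _
        _ ≤ M * ‖h‖ := mul_le_mul (hA t) (C0_norm_apply_le h t) (norm_nonneg _) hM)

@[simp] lemma diagL_apply (A : ℕ → ((Fin n → ℝ) →L[ℝ] (Fin n → ℝ))) {M : ℝ} (hM : 0 ≤ M)
    (hA : ∀ t, ‖A t‖ ≤ M) (h : C₀(ℕ, Fin n → ℝ)) (t : ℕ) :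
    diagL A hM hA h t = A t (h t) := rfl

lemma diagL_sub_norm_le (A B : ℕ → ((Fin n → ℝ) →L[ℝ] (Fin n → ℝ)))
    {MA MB : ℝ} (hMA : 0 ≤ MA) (hMB : 0 ≤ MB) (hA : ∀ t, ‖A t‖ ≤ MA) (hB : ∀ t, ‖B t‖ ≤ MB)
    {C : ℝ} (hC : 0 ≤ C) (h : ∀ t, ‖A t - B t‖ ≤ C) :
    ‖diagL A hMA hA - diagL B hMB hB‖ ≤ C := by
  refine ContinuousLinearMap.opNorm_le_bound _ hC (fun v => ?_)
  refine C0_norm_le _ (by positivity) (fun t => ?_)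
  have : (diagL A hMA hA - diagL B hMB hB) v t = (A t - B t) (v t) := by simp
  rw [this]
  calc ‖(A t - B t) (v t)‖ ≤ ‖A t - B t‖ * ‖v t‖ := (A t - B t).le_opNorm _
    _ ≤ C * ‖v‖ := mul_le_mul (h t) (C0_norm_apply_le v t) (norm_nonneg _) hC

section WithF

variable {U : Set (Fin d → ℝ)}
variable {f : (Fin n → ℝ) → (Fin d → ℝ) → (Fin n → ℝ)}

lemma small_f
    (hf0 : ∀ u ∈ U, f 0 u = 0)
    (hfd : ∀ u ∈ U, (∀ x : Fin n → ℝ, DifferentiableAt ℝ (fun x' => f x' u) x) ∧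
      Continuous (fun x : Fin n → ℝ => fderiv ℝ (fun x' => f x' u) x))
    (hlim : ∀ B ⊆ U, B.Nonempty → IsBounded B →
      ∀ ε > (0 : ℝ), ∃ δ > (0 : ℝ), ∀ x : Fin n → ℝ, ‖x‖ < δ → ∀ u ∈ B,
        ‖fderiv ℝ (fun x' => f x' u) x‖ < ε)
    {B : Set (Fin d → ℝ)} (hBU : B ⊆ U) (hBne : B.Nonempty) (hBb : IsBounded B)
    {ε : ℝ} (hε : 0 < ε) :
    ∃ δ > (0 : ℝ), ∀ v ∈ B, ∀ y : Fin n → ℝ, ‖y‖ ≤ δ → ‖f y v‖ ≤ ε * ‖y‖ := by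
  obtain ⟨δ₁, hδ₁, h₁⟩ := hlim B hBU hBne hBb ε hε
  refine ⟨δ₁ / 2, by positivity, fun v hv y hy => ?_⟩
  have hconv : Convex ℝ (Metric.closedBall (0 : Fin n → ℝ) (δ₁ / 2)) := convex_closedBall _ _
  have hdiff : ∀ z ∈ Metric.closedBall (0 : Fin n → ℝ) (δ₁ / 2),
      DifferentiableAt ℝ (fun x' => f x' v) z := fun z _ => (hfd v (hBU hv)).1 z
  have hbound : ∀ z ∈ Metric.closedBall (0 : Fin n → ℝ) (δ₁ / 2),
      ‖fderiv ℝ (fun x' => f x' v) z‖ ≤ ε := by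
    intro z hz
    rw [Metric.mem_closedBall, dist_zero_right] at hz
    exact (h₁ z (lt_of_le_of_lt hz (by linarith)) v hv).le
  have h0 : (0 : Fin n → ℝ) ∈ Metric.closedBall (0 : Fin n → ℝ) (δ₁ / 2) := by
    simp [hδ₁.le]; positivity
  have hymem : y ∈ Metric.closedBall (0 : Fin n → ℝ) (δ₁ / 2) := by
    rwa [Metric.mem_closedBall, dist_zero_right]
  have := hconv.norm_image_sub_le_of_norm_fderiv_le hdiff hbound h0 hymem
  simpa [hf0 v (hBU hv)] using this

lemma unif_bdd
    (hbdd : ∀ s : Set ((Fin n → ℝ) × (Fin d → ℝ)), s ⊆ Set.univ ×ˢ U → IsBounded s →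
      IsBounded ((fun q : (Fin n → ℝ) × (Fin d → ℝ) =>
        fderiv ℝ (fun x' => f x' q.2) q.1) '' s))
    {B : Set (Fin d → ℝ)} (hBU : B ⊆ U) (hBb : IsBounded B) (R : ℝ) :
    ∃ M : ℝ, 0 ≤ M ∧ ∀ v ∈ B, ∀ y : Fin n → ℝ, ‖y‖ ≤ R →
      ‖fderiv ℝ (fun x' => f x' v) y‖ ≤ M := by
  have hs : (Metric.closedBall (0 : Fin n → ℝ) R ×ˢ B) ⊆ Set.univ ×ˢ U :=
    Set.prod_mono (Set.subset_univ _) hBU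
  have hsb : IsBounded (Metric.closedBall (0 : Fin n → ℝ) R ×ˢ B) :=
    (Metric.isBounded_closedBall).prod hBb
  obtain ⟨M, hM⟩ := (isBounded_iff_forall_norm_le).1 (hbdd _ hs hsb)
  refine ⟨max M 0, le_max_right _ _, fun v hv y hy => ?_⟩
  refine le_trans (hM _ ⟨(y, v), ⟨?_, hv⟩, rfl⟩) (le_max_left _ _)
  rwa [Metric.mem_closedBall, dist_zero_right]

lemma equicont
    (hfd : ∀ u ∈ U, (∀ x : Fin n → ℝ, DifferentiableAt ℝ (fun x' => f x' u) x) ∧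
      Continuous (fun x : Fin n → ℝ => fderiv ℝ (fun x' => f x' u) x))
    (hlim : ∀ B ⊆ U, B.Nonempty → IsBounded B →
      ∀ ε > (0 : ℝ), ∃ δ > (0 : ℝ), ∀ x : Fin n → ℝ, ‖x‖ < δ → ∀ u ∈ B,
        ‖fderiv ℝ (fun x' => f x' u) x‖ < ε)
    (u : lp (fun _ : ℕ => Fin d → ℝ) ⊤) (hu : ∀ t, u t ∈ U)
    (x : C₀(ℕ, Fin n → ℝ)) {ε : ℝ} (hε : 0 < ε) :
    ∃ δ > (0 : ℝ), ∀ t : ℕ, ∀ y : Fin n → ℝ, ‖y - x t‖ ≤ δ →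
      ‖fderiv ℝ (fun x' => f x' (u t)) y - fderiv ℝ (fun x' => f x' (u t)) (x t)‖ ≤ ε := by
  have hBU : (Set.range fun t => u t) ⊆ U := by rintro v ⟨t, rfl⟩; exact hu t
  have hBne : (Set.range fun t => u t).Nonempty := ⟨u 0, 0, rfl⟩
  have hBb : IsBounded (Set.range fun t => u t) := lp_range_bounded u
  obtain ⟨δ₁, hδ₁, h₁⟩ := hlim _ hBU hBne hBb (ε / 2) (by positivity)
  obtain ⟨T₀, hT₀⟩ := (Metric.tendsto_atTop.1 (C0_tendsto x) (δ₁ / 4) (by positivity))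
  have hhead : ∀ t, ∃ δt > (0 : ℝ), ∀ y : Fin n → ℝ, ‖y - x t‖ ≤ δt →
      ‖fderiv ℝ (fun x' => f x' (u t)) y - fderiv ℝ (fun x' => f x' (u t)) (x t)‖ ≤ ε := by
    intro t
    have hc := (hfd (u t) (hu t)).2.continuousAt (x := x t)
    rw [Metric.continuousAt_iff] at hc
    obtain ⟨δt, hδt, hct⟩ := hc ε hε
    refine ⟨δt / 2, by positivity, fun y hy => ?_⟩
    have hlt : dist y (x t) < δt := by
      rw [dist_eq_norm]; exact lt_of_le_of_lt hy (by linarith)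
    have := hct hlt
    rw [dist_eq_norm] at this; exact this.le
  choose δf hδf hδfP using hhead
  obtain ⟨δ₂, hδ₂, h₂⟩ := exists_pos_forall_le T₀ δf (fun t _ => hδf t)
  refine ⟨min δ₂ (δ₁ / 4), lt_min hδ₂ (by positivity), fun t y hy => ?_⟩
  by_cases ht : t < T₀
  · exact hδfP t y (hy.trans ((min_le_left _ _).trans (h₂ t ht)))
  · have hxt : ‖x t‖ < δ₁ / 4 := by
      have := hT₀ t (by omega)
      rwa [dist_zero_right] at this
    have hyn : ‖y‖ < δ₁ := by
      have h3 : ‖y‖ ≤ ‖y - x t‖ + ‖x t‖ := by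
        simpa using norm_add_le (y - x t) (x t)
      have h4 : min δ₂ (δ₁ / 4) ≤ δ₁ / 4 := min_le_right _ _
      linarith
    have h1 := h₁ y hyn (u t) ⟨t, rfl⟩
    have h2 := h₁ (x t) (by linarith) (u t) ⟨t, rfl⟩
    calc ‖_ - _‖ ≤ ‖fderiv ℝ (fun x' => f x' (u t)) y‖ +
        ‖fderiv ℝ (fun x' => f x' (u t)) (x t)‖ := norm_sub_le _ _
      _ ≤ ε := by linarith

lemma nemytskii_cont
    (hfc : ContinuousOn (fun q : (Fin n → ℝ) × (Fin d → ℝ) => f q.1 q.2) (Set.univ ×ˢ U))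
    (hsmall : ∀ (B : Set (Fin d → ℝ)), B ⊆ U → B.Nonempty → IsBounded B →
      ∀ ε > (0:ℝ), ∃ δ > (0 : ℝ), ∀ v ∈ B, ∀ y : Fin n → ℝ, ‖y‖ ≤ δ → ‖f y v‖ ≤ ε * ‖y‖)
    (xz : C₀(ℕ, Fin n → ℝ)) (uz : lp (fun _ : ℕ => Fin d → ℝ) ⊤) (huz : ∀ t, uz t ∈ U)
    {ε : ℝ} (hε : 0 < ε) :
    ∃ δ > (0 : ℝ), ∀ (x : C₀(ℕ, Fin n → ℝ)) (u : lp (fun _ : ℕ => Fin d → ℝ) ⊤),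
      (∀ t, u t ∈ U) → ‖x - xz‖ ≤ δ → ‖u - uz‖ ≤ δ →
      ∀ t, ‖f (x t) (u t) - f (xz t) (uz t)‖ ≤ ε := by
  set B : Set (Fin d → ℝ) := {v ∈ U | ‖v‖ ≤ ‖uz‖ + 1} with hB
  have hBU : B ⊆ U := fun v hv => hv.1
  have hBne : B.Nonempty := ⟨uz 0, huz 0, by
    have := lp_norm_apply_le uz 0; linarith⟩
  have hBb : IsBounded B := by
    rw [isBounded_iff_forall_norm_le]
    exact ⟨‖uz‖ + 1, fun v hv => hv.2⟩
  obtain ⟨δ₁, hδ₁, h₁⟩ := hsmall B hBU hBne hBb 1 one_pos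
  set η : ℝ := min δ₁ (ε / 2) with hη
  have hηpos : 0 < η := lt_min hδ₁ (by positivity)
  obtain ⟨T₀, hT₀⟩ := Metric.tendsto_atTop.1 (C0_tendsto xz) (η / 2) (by positivity)
  have hhead : ∀ t, ∃ δt > (0 : ℝ), ∀ (y : Fin n → ℝ) (v : Fin d → ℝ), v ∈ U →
      ‖y - xz t‖ < δt → ‖v - uz t‖ < δt → ‖f y v - f (xz t) (uz t)‖ ≤ ε := by
    intro t
    have hc := hfc (xz t, uz t) ⟨Set.mem_univ _, huz t⟩
    rw [Metric.continuousWithinAt_iff] at hc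
    obtain ⟨δt, hδt, hct⟩ := hc ε hε
    refine ⟨δt, hδt, fun y v hv hy hv' => ?_⟩
    have := hct (x := (y, v)) ⟨Set.mem_univ _, hv⟩ ?_
    · rw [dist_eq_norm] at this; exact this.le
    · rw [Prod.dist_eq]
      exact max_lt (by rwa [dist_eq_norm]) (by rwa [dist_eq_norm])
  choose δf hδf hδfP using hhead
  obtain ⟨δ₂, hδ₂, h₂⟩ := exists_pos_forall_le T₀ δf (fun t _ => hδf t)
  refine ⟨min (min 1 (η / 2)) (δ₂ / 2), by positivity, fun x u hu hx hu' t => ?_⟩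
  set δ : ℝ := min (min 1 (η / 2)) (δ₂ / 2) with hδdef
  have hδ1 : δ ≤ 1 := (min_le_left _ _).trans (min_le_left _ _)
  have hδη : δ ≤ η / 2 := (min_le_left _ _).trans (min_le_right _ _)
  have hδ2 : δ ≤ δ₂ / 2 := min_le_right _ _
  by_cases ht : t < T₀
  · have hxt : ‖x t - xz t‖ < δ₂ := by
      have h5 : ‖x t - xz t‖ ≤ ‖x - xz‖ := by
        have := C0_norm_apply_le (x - xz) t
        simpa using this
      linarith
    have hut : ‖u t - uz t‖ < δ₂ := by
      have h5 : ‖u t - uz t‖ ≤ ‖u - uz‖ := by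
        have := lp_norm_apply_le (u - uz) t
        simpa using this
      linarith
    exact hδfP t (x t) (u t) (hu t) (lt_of_lt_of_le hxt (h₂ t ht))
      (lt_of_lt_of_le hut (h₂ t ht))
  · have hx0t : ‖xz t‖ < η / 2 := by
      have := hT₀ t (by omega); rwa [dist_zero_right] at this
    have hxt : ‖x t‖ ≤ η := by
      have h5 : ‖x t - xz t‖ ≤ ‖x - xz‖ := by
        have := C0_norm_apply_le (x - xz) t; simpa using this
      have h6 : ‖x t‖ ≤ ‖x t - xz t‖ + ‖xz t‖ := by
        simpa using norm_add_le (x t - xz t) (xz t)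
      linarith
    have huB : u t ∈ B := by
      refine ⟨hu t, ?_⟩
      have h5 : ‖u t‖ ≤ ‖u‖ := lp_norm_apply_le u t
      have h6 : ‖u‖ - ‖uz‖ ≤ ‖u - uz‖ := norm_sub_norm_le u uz
      linarith
    have hu0B : uz t ∈ B := ⟨huz t, by have := lp_norm_apply_le uz t; linarith⟩
    have e1 : ‖f (x t) (u t)‖ ≤ 1 * ‖x t‖ := h₁ _ huB _ (hxt.trans (min_le_left _ _))
    have e2 : ‖f (xz t) (uz t)‖ ≤ 1 * ‖xz t‖ :=
      h₁ _ hu0B _ (by have := min_le_left δ₁ (ε/2); linarith)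
    have hηε : η ≤ ε / 2 := min_le_right _ _
    calc ‖f (x t) (u t) - f (xz t) (uz t)‖ ≤ ‖f (x t) (u t)‖ + ‖f (xz t) (uz t)‖ :=
        norm_sub_le _ _
      _ ≤ ε := by simp only [one_mul] at e1 e2; linarith

end WithF

end Stmt5Aux

set_option maxHeartbeats 2000000 in
open Stmt5Aux in
theorem stmt_5 {n d : ℕ}
    (U : Set (Fin d → ℝ)) (hUne : U.Nonempty) (hUcl : IsClosed U)
    (f : (Fin n → ℝ) → (Fin d → ℝ) → (Fin n → ℝ))
    -- (a)
    (hfc : ContinuousOn (fun q : (Fin n → ℝ) × (Fin d → ℝ) => f q.1 q.2) (Set.univ ×ˢ U))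
    -- (b)
    (hf0 : ∀ u ∈ U, f 0 u = 0)
    -- (c)
    (hfd : ∀ u ∈ U, (∀ x : Fin n → ℝ, DifferentiableAt ℝ (fun x' => f x' u) x) ∧
      Continuous (fun x : Fin n → ℝ => fderiv ℝ (fun x' => f x' u) x))
    -- (d)
    (hbdd : ∀ s : Set ((Fin n → ℝ) × (Fin d → ℝ)), s ⊆ Set.univ ×ˢ U → IsBounded s →
      IsBounded ((fun q : (Fin n → ℝ) × (Fin d → ℝ) =>
        fderiv ℝ (fun x' => f x' q.2) q.1) '' s))
    -- (e)
    (hlim : ∀ B ⊆ U, B.Nonempty → IsBounded B →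
      ∀ ε > (0 : ℝ), ∃ δ > (0 : ℝ), ∀ x : Fin n → ℝ, ‖x‖ < δ → ∀ u ∈ B,
        ‖fderiv ℝ (fun x' => f x' u) x‖ < ε) :
    ∃ T : C₀(ℕ, Fin n → ℝ) × lp (fun _ : ℕ => Fin d → ℝ) ⊤ → C₀(ℕ, Fin n → ℝ),
      -- T is the operator 𝒯 on c₀(ℕ, ℝⁿ) × ℓ∞(ℕ, U) (in particular 𝒯 is well defined)
      (∀ (x : C₀(ℕ, Fin n → ℝ)) (u : lp (fun _ : ℕ => Fin d → ℝ) ⊤),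
        (∀ t : ℕ, u t ∈ U) → ∀ t : ℕ, T (x, u) t = x (t + 1) - f (x t) (u t)) ∧
      -- (α)
      ContinuousOn T
        (Set.univ ×ˢ {u : lp (fun _ : ℕ => Fin d → ℝ) ⊤ | ∀ t : ℕ, u t ∈ U}) ∧
      -- (β)
      (∀ u : lp (fun _ : ℕ => Fin d → ℝ) ⊤, (∀ t : ℕ, u t ∈ U) →
        (∀ x : C₀(ℕ, Fin n → ℝ), DifferentiableAt ℝ (fun x' => T (x', u)) x) ∧
        Continuous (fun x : C₀(ℕ, Fin n → ℝ) => fderiv ℝ (fun x' => T (x', u)) x)) := by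
  classical
  have hsmall : ∀ (B : Set (Fin d → ℝ)), B ⊆ U → B.Nonempty → IsBounded B →
      ∀ ε > (0:ℝ), ∃ δ > (0 : ℝ), ∀ v ∈ B, ∀ y : Fin n → ℝ, ‖y‖ ≤ δ → ‖f y v‖ ≤ ε * ‖y‖ :=
    fun B hBU hBne hBb ε hε => small_f hf0 hfd hlim hBU hBne hBb hε
  -- well-definedness
  have htend : ∀ (x : C₀(ℕ, Fin n → ℝ)) (u : lp (fun _ : ℕ => Fin d → ℝ) ⊤),
      (∀ t, u t ∈ U) → Tendsto (fun t => x (t + 1) - f (x t) (u t)) atTop (𝓝 0) := by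
    intro x u hu
    have h1 : Tendsto (fun t => x (t + 1)) atTop (𝓝 (0 : Fin n → ℝ)) :=
      (C0_tendsto x).comp (tendsto_add_atTop_nat 1)
    have hBU : (Set.range fun t => u t) ⊆ U := by rintro v ⟨t, rfl⟩; exact hu t
    obtain ⟨δ₁, hδ₁, hs⟩ := hsmall _ hBU ⟨u 0, 0, rfl⟩ (lp_range_bounded u) 1 one_pos
    have h2 : Tendsto (fun t => f (x t) (u t)) atTop (𝓝 (0 : Fin n → ℝ)) := by
      rw [tendsto_zero_iff_norm_tendsto_zero]
      have hev : ∀ᶠ t in atTop, ‖f (x t) (u t)‖ ≤ ‖x t‖ := by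
        have hev0 : ∀ᶠ t in atTop, ‖x t‖ ≤ δ₁ := by
          have := (Metric.tendsto_atTop.1 (C0_tendsto x)) δ₁ hδ₁
          obtain ⟨N, hN⟩ := this
          refine eventually_atTop.2 ⟨N, fun t ht => ?_⟩
          have := hN t ht; rw [dist_zero_right] at this; exact this.le
        filter_upwards [hev0] with t ht
        have := hs (u t) ⟨t, rfl⟩ (x t) ht
        simpa using this
      refine squeeze_zero' (Eventually.of_forall (fun t => norm_nonneg _)) hev ?_
      simpa using (C0_tendsto x).norm
    simpa using h1.sub h2
  refine ⟨fun p => if h : ∀ t, p.2 t ∈ U then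
      mkC0 (fun t => p.1 (t + 1) - f (p.1 t) (p.2 t)) (htend p.1 p.2 h) else 0, ?_, ?_, ?_⟩
  · intro x u hu t
    simp only [dif_pos hu, mkC0_apply]
  · -- (α) continuity
    intro p₀ hp₀
    obtain ⟨hp₀1, hp₀2⟩ := hp₀
    rw [Metric.continuousWithinAt_iff]
    intro ε hε
    obtain ⟨δN, hδN, hN⟩ := nemytskii_cont hfc hsmall p₀.1 p₀.2 hp₀2 (ε := ε / 4)
      (by positivity)
    refine ⟨min δN (ε / 4), by positivity, ?_⟩
    rintro ⟨x, u⟩ ⟨-, hu⟩ hdist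
    have hu' : ∀ t, u t ∈ U := hu
    have hp₀2' : ∀ t, p₀.2 t ∈ U := hp₀2
    rw [Prod.dist_eq] at hdist
    have hd1 : dist x p₀.1 < min δN (ε / 4) := lt_of_le_of_lt (le_max_left _ _) hdist
    have hd2 : dist u p₀.2 < min δN (ε / 4) := lt_of_le_of_lt (le_max_right _ _) hdist
    have hx1 : ‖x - p₀.1‖ ≤ δN := by
      rw [← dist_eq_norm]; exact hd1.le.trans (min_le_left _ _)
    have hx2 : ‖x - p₀.1‖ ≤ ε / 4 := by
      rw [← dist_eq_norm]; exact hd1.le.trans (min_le_right _ _)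
    have hu1 : ‖u - p₀.2‖ ≤ δN := by
      rw [← dist_eq_norm]; exact hd2.le.trans (min_le_left _ _)
    have hcomp := hN x u hu' hx1 hu1
    rw [dist_eq_norm]
    have hle : ‖(if h : ∀ t, u t ∈ U then
          mkC0 (fun t => x (t + 1) - f (x t) (u t)) (htend x u h) else 0) -
        (if h : ∀ t, p₀.2 t ∈ U then
          mkC0 (fun t => p₀.1 (t + 1) - f (p₀.1 t) (p₀.2 t)) (htend p₀.1 p₀.2 h) else 0)‖
        ≤ ε / 2 := by
      rw [dif_pos hu', dif_pos hp₀2']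
      refine C0_norm_le _ (by positivity) (fun t => ?_)
      have hcoe : (mkC0 (fun t => x (t + 1) - f (x t) (u t)) (htend x u hu) -
          mkC0 (fun t => p₀.1 (t + 1) - f (p₀.1 t) (p₀.2 t)) (htend p₀.1 p₀.2 hp₀2)) t
          = (x (t + 1) - p₀.1 (t + 1)) - (f (x t) (u t) - f (p₀.1 t) (p₀.2 t)) := by
        simp only [ZeroAtInftyContinuousMap.coe_sub, Pi.sub_apply, mkC0_apply]
        abel
      rw [hcoe]
      have h5 : ‖x (t + 1) - p₀.1 (t + 1)‖ ≤ ‖x - p₀.1‖ := by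
        have := C0_norm_apply_le (x - p₀.1) (t + 1); simpa using this
      calc ‖(x (t + 1) - p₀.1 (t + 1)) - (f (x t) (u t) - f (p₀.1 t) (p₀.2 t))‖
          ≤ ‖x (t + 1) - p₀.1 (t + 1)‖ + ‖f (x t) (u t) - f (p₀.1 t) (p₀.2 t)‖ :=
            norm_sub_le _ _
        _ ≤ ε / 2 := by have := hcomp t; linarith
    calc _ ≤ ε / 2 := hle
      _ < ε := by linarith
  · -- (β) differentiability
    intro u hu
    have hBU : (Set.range fun t => u t) ⊆ U := by rintro v ⟨t, rfl⟩; exact hu t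
    -- uniform bound function
    have hMx : ∀ x : C₀(ℕ, Fin n → ℝ), ∃ M : ℝ, 0 ≤ M ∧
        ∀ t, ‖fderiv ℝ (fun x' => f x' (u t)) (x t)‖ ≤ M := by
      intro x
      obtain ⟨M, hM0, hMb⟩ := unif_bdd hbdd hBU (lp_range_bounded u) ‖x‖
      exact ⟨M, hM0, fun t => hMb (u t) ⟨t, rfl⟩ (x t) (C0_norm_apply_le x t)⟩
    choose M hM0 hMb using hMx
    set D : C₀(ℕ, Fin n → ℝ) → (C₀(ℕ, Fin n → ℝ) →L[ℝ] C₀(ℕ, Fin n → ℝ)) :=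
      fun x => shiftL - diagL (fun t => fderiv ℝ (fun x' => f x' (u t)) (x t))
        (hM0 x) (hMb x) with hD
    have hasFD : ∀ x : C₀(ℕ, Fin n → ℝ),
        HasFDerivAt (fun x' => (fun p : C₀(ℕ, Fin n → ℝ) × lp (fun _ : ℕ => Fin d → ℝ) ⊤ =>
          if h : ∀ t, p.2 t ∈ U then
            mkC0 (fun t => p.1 (t + 1) - f (p.1 t) (p.2 t)) (htend p.1 p.2 h) else 0) (x', u))
          (D x) x := by
      intro x
      rw [hasFDerivAt_iff_isLittleO_nhds_zero]
      rw [Asymptotics.isLittleO_iff]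
      intro c hc
      obtain ⟨δ, hδ, hec⟩ := equicont hfd hlim u hu x (ε := c) hc
      rw [Metric.eventually_nhds_iff]
      refine ⟨δ, hδ, ?_⟩
      intro h hh
      rw [dist_zero_right] at hh
      simp only [dif_pos hu]
      refine C0_norm_le _ (by positivity) (fun t => ?_)
      have hcoe : (mkC0 (fun t => (x + h) (t + 1) - f ((x + h) t) (u t)) (htend _ u hu) -
          mkC0 (fun t => x (t + 1) - f (x t) (u t)) (htend x u hu) - (D x) h) t
          = -(f (x t + h t) (u t) - f (x t) (u t)
              - (fderiv ℝ (fun x' => f x' (u t)) (x t)) (h t)) := by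
        simp only [hD, ZeroAtInftyContinuousMap.coe_sub, Pi.sub_apply, mkC0_apply,
          ContinuousLinearMap.coe_sub', shiftL_apply, diagL_apply,
          ZeroAtInftyContinuousMap.coe_add, Pi.add_apply]
        abel
      rw [hcoe, norm_neg]
      -- MVT estimate on the ball around x t
      have hconv : Convex ℝ (Metric.closedBall (x t) δ) := convex_closedBall _ _
      have hdiff : ∀ z ∈ Metric.closedBall (x t) δ,
          DifferentiableAt ℝ (fun x' => f x' (u t)) z := fun z _ => (hfd (u t) (hu t)).1 z
      have hbound : ∀ z ∈ Metric.closedBall (x t) δ,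
          ‖fderiv ℝ (fun x' => f x' (u t)) z - fderiv ℝ (fun x' => f x' (u t)) (x t)‖ ≤ c := by
        intro z hz
        rw [Metric.mem_closedBall, dist_eq_norm] at hz
        exact hec t z hz
      have hmem1 : x t ∈ Metric.closedBall (x t) δ := Metric.mem_closedBall_self hδ.le
      have hmem2 : x t + h t ∈ Metric.closedBall (x t) δ := by
        rw [Metric.mem_closedBall, dist_eq_norm]
        have : ‖h t‖ ≤ ‖h‖ := C0_norm_apply_le h t
        simpa using this.trans hh.le
      have := hconv.norm_image_sub_le_of_norm_fderiv_le' hdiff hbound hmem1 hmem2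
      have hsimp : x t + h t - x t = h t := by abel
      rw [hsimp] at this
      exact this.trans (mul_le_mul_of_nonneg_left (C0_norm_apply_le h t) hc.le)
    constructor
    · exact fun x => (hasFD x).differentiableAt
    · have heq : (fun x : C₀(ℕ, Fin n → ℝ) => fderiv ℝ
          (fun x' => (fun p : C₀(ℕ, Fin n → ℝ) × lp (fun _ : ℕ => Fin d → ℝ) ⊤ =>
            if h : ∀ t, p.2 t ∈ U then
              mkC0 (fun t => p.1 (t + 1) - f (p.1 t) (p.2 t)) (htend p.1 p.2 h) else 0)
            (x', u)) x) = D := funext (fun x => (hasFD x).fderiv)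
      rw [heq]
      refine (Metric.continuous_iff (α := C₀(ℕ, Fin n → ℝ))
        (β := C₀(ℕ, Fin n → ℝ) →L[ℝ] C₀(ℕ, Fin n → ℝ))).2 ?_
      intro x ε hε
      obtain ⟨δ, hδ, hec⟩ := equicont hfd hlim u hu x (ε := ε / 2) (by positivity)
      refine ⟨δ, hδ, fun x' hx' => ?_⟩
      refine lt_of_eq_of_lt (dist_eq_norm (D x') (D x)) ?_
      have hle : ‖D x' - D x‖ ≤ ε / 2 := by
        refine ContinuousLinearMap.opNorm_le_bound _ (by positivity) (fun v => ?_)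
        refine C0_norm_le _ (by positivity) (fun t => ?_)
        have hcoe : ((D x' - D x) v) t =
            (fderiv ℝ (fun z => f z (u t)) (x t) -
              fderiv ℝ (fun z => f z (u t)) (x' t)) (v t) := by
          simp only [hD, ContinuousLinearMap.coe_sub', Pi.sub_apply,
            ZeroAtInftyContinuousMap.coe_sub, shiftL_apply, diagL_apply]
          abel
        rw [hcoe]
        have hb : ‖fderiv ℝ (fun z => f z (u t)) (x t) -
            fderiv ℝ (fun z => f z (u t)) (x' t)‖ ≤ ε / 2 := by
          rw [norm_sub_rev]
          refine hec t (x' t) ?_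
          have h5 : ‖x' t - x t‖ ≤ ‖x' - x‖ := by
            have := C0_norm_apply_le (x' - x) t; simpa using this
          rw [dist_eq_norm] at hx'
          exact h5.trans hx'.le
        calc ‖_‖ ≤ _ * ‖v t‖ := ContinuousLinearMap.le_opNorm _ _
          _ ≤ (ε / 2) * ‖v‖ :=
            mul_le_mul hb (C0_norm_apply_le v t) (norm_nonneg _) (by positivity)
      exact lt_of_le_of_lt hle (by linarith)
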